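/- Fix A ∈ 𝔅, fix all couplings J_B with B ≠ A, and fix β_NL ∈ ℝ. Then for every x ≠ 0 one has the reciprocal relation e^{−2β_NL x} · Γ(β, −x) = − e^{−β_NL x} Γ(β, x) / ( e^{−β_NL x} + Γ(β, x) · sinh(2β x)/x ). -/

import Mathlib

open MeasureTheory Real Finset

/-- The spin value of a Boolean: `true ↦ 1`, `false ↦ -1`. -/
noncomputable def spinVal (b : Bool) : ℝ := if b then 1 else -1

/-- `σ_B = ∏ i ∈ B, σ_i`. -/
noncomputable def sigmaSet {V : Type} (σ : V → Bool) (B : Finset V) : ℝ :=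
  ∏ i ∈ B, spinVal (σ i)

/-- The partition function `Z(β, x)` with all couplings `J_B`, `B ≠ A`, fixed and
the coupling on `A` equal to `x`. -/
noncomputable def Zfun {V : Type} [Fintype V] [DecidableEq V] (β : ℝ)
    (ℬ : Finset (Finset V)) (A : Finset V) (J : Finset V → ℝ) (x : ℝ) : ℝ :=
  ∑ σ : V → Bool,
    Real.exp (β * ∑ B ∈ ℬ.erase A, J B * sigmaSet σ B + β * x * sigmaSet σ A)

/-- The Gibbs average `⟨σ_A⟩_x` with all couplings `J_B`, `B ≠ A`, fixed and
the coupling on `A` equal to `x`. -/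
noncomputable def gibbsA {V : Type} [Fintype V] [DecidableEq V] (β : ℝ)
    (ℬ : Finset (Finset V)) (A : Finset V) (J : Finset V → ℝ) (x : ℝ) : ℝ :=
  (∑ σ : V → Bool,
    sigmaSet σ A * Real.exp (β * ∑ B ∈ ℬ.erase A, J B * sigmaSet σ B + β * x * sigmaSet σ A)) /
  Zfun β ℬ A J x

/-- `Γ(β, x) = -x ⟨σ_A⟩_x + x tanh(βx) + (1 - e^{-β_NL x}) x / sinh(2βx)` (for `x ≠ 0`). -/
noncomputable def GammaA {V : Type} [Fintype V] [DecidableEq V] (β : ℝ)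
    (ℬ : Finset (Finset V)) (A : Finset V) (J : Finset V → ℝ) (βNL : ℝ) (x : ℝ) : ℝ :=
  -x * gibbsA β ℬ A J x + x * Real.tanh (β * x)
    + (1 - Real.exp (-(βNL * x))) * x / Real.sinh (2 * β * x)

lemma exp_spin1 (a b t : ℝ) (ht : t = 1 ∨ t = -1) :
    Real.exp (a + b * t) = Real.cosh b * Real.exp a + t * (Real.sinh b * Real.exp a) := by
  rcases ht with h | h <;> subst h
  · rw [show a + b * 1 = a + b by ring, Real.exp_add, Real.cosh_eq, Real.sinh_eq]; ring
  · rw [show a + b * (-1) = a + (-b) by ring, Real.exp_add, Real.exp_neg,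
      Real.cosh_eq, Real.sinh_eq]
    have hb := Real.exp_ne_zero b
    field_simp [Real.exp_neg]
    have he : Real.exp b * Real.exp (-b) = 1 := by rw [← Real.exp_add, add_neg_cancel, Real.exp_zero]
    linear_combination (-2) * he

lemma exp_spin2 (a b t : ℝ) (ht : t = 1 ∨ t = -1) :
    t * Real.exp (a + b * t) = Real.sinh b * Real.exp a + t * (Real.cosh b * Real.exp a) := by
  rcases ht with h | h <;> subst h
  · rw [show a + b * 1 = a + b by ring, Real.exp_add, Real.cosh_eq, Real.sinh_eq]; ring
  · rw [show a + b * (-1) = a + (-b) by ring, Real.exp_add, Real.exp_neg,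
      Real.cosh_eq, Real.sinh_eq]
    have hb := Real.exp_ne_zero b
    field_simp [Real.exp_neg]
    have he : Real.exp b * Real.exp (-b) = 1 := by rw [← Real.exp_add, add_neg_cancel, Real.exp_zero]
    linear_combination 2 * he

lemma sigma_pm {V : Type} (σ : V → Bool) (B : Finset V) :
    sigmaSet σ B = 1 ∨ sigmaSet σ B = -1 := by
  have h2 : sigmaSet σ B ^ 2 = 1 := by
    unfold sigmaSet
    rw [← Finset.prod_pow]
    apply Finset.prod_eq_one
    intro i _
    unfold spinVal
    split <;> norm_num
  rw [sq] at h2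
  exact mul_self_eq_one_iff.mp h2

lemma Zfun_pos {V : Type} [Fintype V] [DecidableEq V] (β : ℝ)
    (ℬ : Finset (Finset V)) (A : Finset V) (J : Finset V → ℝ) (x : ℝ) :
    0 < Zfun β ℬ A J x := by
  apply Finset.sum_pos (fun _ _ => Real.exp_pos _)
  exact ⟨fun _ => true, Finset.mem_univ _⟩

lemma Gamma_eq {V : Type} [Fintype V] [DecidableEq V]
    (ℬ : Finset (Finset V)) (A : Finset V)
    (J : Finset V → ℝ) (β : ℝ) (hβ : 0 < β) (βNL : ℝ)
    (x : ℝ) (hx : x ≠ 0) :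
    GammaA β ℬ A J βNL x
      = x * (Zfun β ℬ A J (-x) / Zfun β ℬ A J x - Real.exp (-(βNL * x)))
        / Real.sinh (2 * β * x) := by
  classical
  set Z0 : ℝ := ∑ σ : V → Bool, Real.exp (β * ∑ B ∈ ℬ.erase A, J B * sigmaSet σ B) with hZ0
  set W : ℝ := ∑ σ : V → Bool,
      sigmaSet σ A * Real.exp (β * ∑ B ∈ ℬ.erase A, J B * sigmaSet σ B) with hW
  have hZrep : ∀ y : ℝ, Zfun β ℬ A J y = Real.cosh (β * y) * Z0 + Real.sinh (β * y) * W := by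
    intro y
    rw [hZ0, hW, Zfun, Finset.mul_sum, Finset.mul_sum, ← Finset.sum_add_distrib]
    refine Finset.sum_congr rfl fun σ _ => ?_
    rw [show β * ∑ B ∈ ℬ.erase A, J B * sigmaSet σ B + β * y * sigmaSet σ A
        = β * ∑ B ∈ ℬ.erase A, J B * sigmaSet σ B + (β * y) * sigmaSet σ A by ring,
      exp_spin1 _ _ _ (sigma_pm σ A)]
    ring
  have hNrep : (∑ σ : V → Bool, sigmaSet σ A *
        Real.exp (β * ∑ B ∈ ℬ.erase A, J B * sigmaSet σ B + β * x * sigmaSet σ A))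
      = Real.sinh (β * x) * Z0 + Real.cosh (β * x) * W := by
    rw [hZ0, hW, Finset.mul_sum, Finset.mul_sum, ← Finset.sum_add_distrib]
    refine Finset.sum_congr rfl fun σ _ => ?_
    rw [show β * ∑ B ∈ ℬ.erase A, J B * sigmaSet σ B + β * x * sigmaSet σ A
        = β * ∑ B ∈ ℬ.erase A, J B * sigmaSet σ B + (β * x) * sigmaSet σ A by ring,
      exp_spin2 _ _ _ (sigma_pm σ A)]
    ring
  have hZx : Zfun β ℬ A J x = Real.cosh (β * x) * Z0 + Real.sinh (β * x) * W := hZrep x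
  have hZmx : Zfun β ℬ A J (-x)
      = Real.cosh (β * x) * Z0 - Real.sinh (β * x) * W := by
    rw [hZrep (-x), show β * -x = -(β * x) by ring, Real.cosh_neg, Real.sinh_neg]
    ring
  set c : ℝ := Real.cosh (β * x) with hc
  set s : ℝ := Real.sinh (β * x) with hs
  have hcpos : 0 < c := Real.cosh_pos _
  have hsne : s ≠ 0 := by
    rw [hs]
    simpa [Real.sinh_eq_zero] using mul_ne_zero (ne_of_gt hβ) hx
  have hZpos : (0:ℝ) < c * Z0 + s * W := hZx ▸ Zfun_pos β ℬ A J x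
  have hZne : c * Z0 + s * W ≠ 0 := ne_of_gt hZpos
  have h1 : c ^ 2 - s ^ 2 = 1 := Real.cosh_sq_sub_sinh_sq (β * x)
  rw [GammaA, gibbsA, hNrep, hZx, hZmx, Real.tanh_eq_sinh_div_cosh,
    show (2:ℝ) * β * x = 2 * (β * x) by ring, Real.sinh_two_mul, ← hc, ← hs]
  have hZne' : Z0 * c + s * W ≠ 0 := by rw [mul_comm]; exact hZne
  field_simp
  linear_combination (-2*s*W) * h1

/-- For fixed couplings `J_B` (`B ≠ A`), `β_NL ∈ ℝ` and every `x ≠ 0`, the reciprocal relation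
`e^{-2β_NL x} Γ(β, -x) = -e^{-β_NL x} Γ(β, x) / (e^{-β_NL x} + Γ(β, x) sinh(2βx)/x)` holds. -/
theorem Gamma_reciprocal_relation
    {V : Type} [Fintype V] [DecidableEq V]
    (ℬ : Finset (Finset V)) (hℬ : ∀ B ∈ ℬ, B.Nonempty)
    (A : Finset V) (hA : A ∈ ℬ)
    (J : Finset V → ℝ) (β : ℝ) (hβ : 0 < β) (βNL : ℝ)
    (x : ℝ) (hx : x ≠ 0) :
    Real.exp (-(2 * βNL * x)) * GammaA β ℬ A J βNL (-x)
      = -(Real.exp (-(βNL * x)) * GammaA β ℬ A J βNL x)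
        / (Real.exp (-(βNL * x)) + GammaA β ℬ A J βNL x * (Real.sinh (2 * β * x) / x)) := by
  have hZxpos := Zfun_pos β ℬ A J x
  have hZmpos := Zfun_pos β ℬ A J (-x)
  have hZxne : Zfun β ℬ A J x ≠ 0 := ne_of_gt hZxpos
  have hZmne : Zfun β ℬ A J (-x) ≠ 0 := ne_of_gt hZmpos
  have h2bx : 2 * β * x ≠ 0 := mul_ne_zero (mul_ne_zero two_ne_zero (ne_of_gt hβ)) hx
  have hS : Real.sinh (2 * β * x) ≠ 0 := by rwa [ne_eq, Real.sinh_eq_zero]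
  have hG1 := Gamma_eq ℬ A J β hβ βNL x hx
  have hG2 := Gamma_eq ℬ A J β hβ βNL (-x) (neg_ne_zero.mpr hx)
  rw [neg_neg, show 2 * β * -x = -(2 * β * x) by ring, Real.sinh_neg,
    show -(βNL * -x) = βNL * x by ring] at hG2
  have hE : Real.exp (βNL * x) = (Real.exp (-(βNL * x)))⁻¹ := by
    rw [← Real.exp_neg, neg_neg]
  have hE2 : Real.exp (-(2 * βNL * x))
      = Real.exp (-(βNL * x)) * Real.exp (-(βNL * x)) := by
    rw [← Real.exp_add]; ring_nf
  have hEne := Real.exp_ne_zero (-(βNL * x))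
  have hD : Real.exp (-(βNL * x)) + GammaA β ℬ A J βNL x * (Real.sinh (2 * β * x) / x)
      = Zfun β ℬ A J (-x) / Zfun β ℬ A J x := by
    rw [hG1]
    field_simp
    ring
  rw [hD, hG1, hG2, hE, hE2, div_div_eq_mul_div]
  field_simp
  ring
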